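/- For α > 0 (with α^{1/2} = √α real) and ν > 0, the polynomial I_n admits the integral representation I_n(z,w|ξ) = (1/(απ))^{1/2} · 2^n · ∫_ℝ t^n · exp( -(1/(4α)) · (2t - I_1)² ) dt, where I_1 = νw - 2αz - ξ, valid for all complex z, w, ξ (the Gaussian integral of a complex-shifted Gaussian). -/

import Mathlib

open Complex

noncomputable def Ic (ν α ξ z w : ℂ) : ℕ → ℂ
  | 0 => 1
  | 1 => ν * w - 2 * α * z - ξ
  | (n + 2) => (ν * w - 2 * α * z - ξ) * Ic ν α ξ z w (n + 1)
      + 2 * α * (n + 1) * Ic ν α ξ z w n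

open MeasureTheory Filter

/-- A downward quadratic tends to -∞ at +∞. -/
lemma quad_tendsto_atTop {a : ℝ} (ha : a < 0) (c : ℝ) :
    Tendsto (fun t : ℝ => a * t ^ 2 + c * t) atTop atBot := by
  have h1 : Tendsto (fun t : ℝ => a * t + c) atTop atBot :=
    (tendsto_const_mul_atBot_of_neg ha).mpr tendsto_id |>.atBot_add tendsto_const_nhds
  have h2 : Tendsto (fun t : ℝ => t * (a * t + c)) atTop atBot :=
    Tendsto.atTop_mul_atBot₀ tendsto_id h1
  convert h2 using 2 with t
  ring

lemma quad_tendsto_atBot {a : ℝ} (ha : a < 0) (c : ℝ) :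
    Tendsto (fun t : ℝ => a * t ^ 2 + c * t) atBot atBot := by
  have h := (quad_tendsto_atTop ha (-c)).comp tendsto_neg_atBot_atTop
  convert h using 2 with t
  simp only [Function.comp_apply]
  ring

/-- Global domination of `|t|^n * exp(re quadratic)`. -/
lemma key_bound {b : ℂ} (hb : b.re < 0) (c : ℂ) (n : ℕ) (t : ℝ) :
    ‖(t : ℂ) ^ n * Complex.exp (b * t ^ 2 + c * t)‖ ≤
      (n.factorial : ℝ) * Real.exp (1 / (4 * (-b.re / 2))) *
        Real.exp (b.re / 2 * t ^ 2 + c.re * t) := by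
  have hε : (0 : ℝ) < -b.re / 2 := by linarith
  have hnorm : ‖(t : ℂ) ^ n * Complex.exp (b * t ^ 2 + c * t)‖ =
      |t| ^ n * Real.exp (b.re * t ^ 2 + c.re * t) := by
    rw [norm_mul, norm_pow, Complex.norm_exp,
      Complex.norm_real, Real.norm_eq_abs]
    have hre : (b * (t : ℂ) ^ 2 + c * t).re = b.re * t ^ 2 + c.re * t := by
      simp [Complex.add_re, Complex.mul_re, ← Complex.ofReal_pow]
    rw [hre]
  rw [hnorm]
  have h1 : |t| ^ n ≤ (n.factorial : ℝ) * Real.exp |t| := by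
    have := Real.pow_div_factorial_le_exp |t| (abs_nonneg t) n
    rw [div_le_iff₀ (by positivity)] at this
    linarith [this, mul_comm (Real.exp |t|) (n.factorial : ℝ)]
  have h2 : |t| ≤ (-b.re / 2) * t ^ 2 + 1 / (4 * (-b.re / 2)) := by
    rw [← sub_nonneg]
    have hne : (-b.re / 2) ≠ 0 := ne_of_gt hε
    have hsq : (-b.re / 2) * t ^ 2 + 1 / (4 * (-b.re / 2)) - |t| =
        (2 * (-b.re / 2) * |t| - 1) ^ 2 / (4 * (-b.re / 2)) := by
      rw [← _root_.sq_abs t, eq_div_iff (by positivity : (4 * (-b.re / 2)) ≠ 0)]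
      have hu : 1 / (4 * (-b.re / 2)) * (4 * (-b.re / 2)) = 1 :=
        one_div_mul_cancel (by positivity)
      linear_combination hu
    rw [hsq]
    positivity
  have h3 : |t| ^ n ≤ (n.factorial : ℝ) * Real.exp ((-b.re / 2) * t ^ 2 + 1 / (4 * (-b.re / 2))) :=
    h1.trans (mul_le_mul_of_nonneg_left (Real.exp_le_exp.mpr h2) (by positivity))
  have h4 : |t| ^ n * Real.exp (b.re * t ^ 2 + c.re * t) ≤
      ((n.factorial : ℝ) * Real.exp ((-b.re / 2) * t ^ 2 + 1 / (4 * (-b.re / 2)))) *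
        Real.exp (b.re * t ^ 2 + c.re * t) :=
    mul_le_mul_of_nonneg_right h3 (Real.exp_nonneg _)
  refine h4.trans_eq ?_
  rw [mul_assoc, mul_assoc, ← Real.exp_add, ← Real.exp_add]
  ring_nf

lemma real_exp_quad_integrable {a : ℝ} (ha : a < 0) (r : ℝ) :
    Integrable fun t : ℝ => Real.exp (a * t ^ 2 + r * t) := by
  have h := integrable_cexp_quadratic' (b := (a : ℂ)) (by simpa using ha) (r : ℂ) 0
  have := h.norm
  refine this.congr (Eventually.of_forall fun t => ?_)
  simp only [Complex.norm_exp]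
  congr 1
  simp [Complex.add_re, Complex.mul_re, ← Complex.ofReal_pow]

lemma key_integrable {b : ℂ} (hb : b.re < 0) (c : ℂ) (n : ℕ) :
    Integrable fun t : ℝ => (t : ℂ) ^ n * Complex.exp (b * t ^ 2 + c * t) := by
  refine Integrable.mono' (((real_exp_quad_integrable (by linarith : b.re / 2 < 0)
      c.re).const_mul ((n.factorial : ℝ) * Real.exp (1 / (4 * (-b.re / 2)))))) ?_
    (Eventually.of_forall fun t => by simpa [mul_assoc] using key_bound hb c n t)
  apply Continuous.aestronglyMeasurable
  continuity

lemma key_tendsto {b : ℂ} (hb : b.re < 0) (c : ℂ) (n : ℕ) (l : Filter ℝ)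
    (hl : Tendsto (fun t : ℝ => b.re / 2 * t ^ 2 + c.re * t) l atBot) :
    Tendsto (fun t : ℝ => (t : ℂ) ^ n * Complex.exp (b * t ^ 2 + c * t)) l (nhds 0) := by
  apply squeeze_zero_norm (key_bound hb c n)
  have h0 : Tendsto (fun t : ℝ => Real.exp (b.re / 2 * t ^ 2 + c.re * t)) l (nhds 0) :=
    Real.tendsto_exp_atBot.comp hl
  simpa using h0.const_mul ((n.factorial : ℝ) * Real.exp (1 / (4 * (-b.re / 2))))

lemma key_hasDerivAt (b c : ℂ) (m : ℕ) (t : ℝ) :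
    HasDerivAt (fun t : ℝ => (t : ℂ) ^ m * Complex.exp (b * t ^ 2 + c * t))
      ((m : ℂ) * (t : ℂ) ^ (m - 1) * Complex.exp (b * t ^ 2 + c * t) +
        (t : ℂ) ^ m * ((2 * b * t + c) * Complex.exp (b * t ^ 2 + c * t))) t := by
  have h1 : HasDerivAt (fun y : ℝ => (y : ℂ) ^ m) ((m : ℂ) * (t : ℂ) ^ (m - 1)) t :=
    (hasDerivAt_pow m (t : ℂ)).comp_ofReal
  have h2 : HasDerivAt (fun z : ℂ => Complex.exp (b * z ^ 2 + c * z))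
      ((2 * b * t + c) * Complex.exp (b * (t : ℂ) ^ 2 + c * t)) (t : ℂ) := by
    have hq : HasDerivAt (fun z : ℂ => b * z ^ 2 + c * z) (2 * b * t + c) (t : ℂ) := by
      have := ((hasDerivAt_pow 2 (t : ℂ)).const_mul b).add
        ((hasDerivAt_id (t : ℂ)).const_mul c)
      exact this.congr_deriv (by norm_num; ring)
    simpa [mul_comm] using hq.cexp
  exact h1.mul (h2.comp_ofReal)

/-- The moment recursion by integration by parts. -/
lemma key_parts {b : ℂ} (hb : b.re < 0) (c : ℂ) (m : ℕ) :
    (m : ℂ) * (∫ t : ℝ, (t : ℂ) ^ (m - 1) * Complex.exp (b * t ^ 2 + c * t)) +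
      (2 * b * (∫ t : ℝ, (t : ℂ) ^ (m + 1) * Complex.exp (b * t ^ 2 + c * t)) +
        c * ∫ t : ℝ, (t : ℂ) ^ m * Complex.exp (b * t ^ 2 + c * t)) = 0 := by
  have hquadT := quad_tendsto_atTop (by linarith : b.re / 2 < 0) c.re
  have hquadB := quad_tendsto_atBot (by linarith : b.re / 2 < 0) c.re
  have hint : Integrable (fun t : ℝ =>
      (m : ℂ) * (t : ℂ) ^ (m - 1) * Complex.exp (b * t ^ 2 + c * t) +
        (t : ℂ) ^ m * ((2 * b * t + c) * Complex.exp (b * t ^ 2 + c * t))) := by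
    have h1 := (key_integrable hb c (m - 1)).const_mul (m : ℂ)
    have h2 := (key_integrable hb c (m + 1)).const_mul (2 * b)
    have h3 := (key_integrable hb c m).const_mul c
    refine (h1.add (h2.add h3)).congr (Eventually.of_forall fun t => ?_)
    simp only [Pi.add_apply]
    push_cast
    ring
  have h0 := integral_of_hasDerivAt_of_tendsto (key_hasDerivAt b c m) hint
    (key_tendsto hb c m atBot hquadB) (key_tendsto hb c m atTop hquadT)
  rw [sub_zero] at h0
  have h1 := (key_integrable hb c (m - 1)).const_mul (m : ℂ)
  have h2 := (key_integrable hb c (m + 1)).const_mul (2 * b)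
  have h3 := (key_integrable hb c m).const_mul c
  have heq : (fun t : ℝ => (m : ℂ) * (t : ℂ) ^ (m - 1) * Complex.exp (b * t ^ 2 + c * t) +
      (t : ℂ) ^ m * ((2 * b * t + c) * Complex.exp (b * t ^ 2 + c * t))) =
      fun t : ℝ => (m : ℂ) * ((t : ℂ) ^ (m - 1) * Complex.exp (b * t ^ 2 + c * t)) +
        (2 * b * ((t : ℂ) ^ (m + 1) * Complex.exp (b * t ^ 2 + c * t)) +
          c * ((t : ℂ) ^ m * Complex.exp (b * t ^ 2 + c * t))) := by
    ext t
    push_cast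
    ring
  have h23 : Integrable (fun x : ℝ =>
      2 * b * ((x : ℂ) ^ (m + 1) * Complex.exp (b * x ^ 2 + c * x)) +
        c * ((x : ℂ) ^ m * Complex.exp (b * x ^ 2 + c * x))) := h2.add h3
  rw [heq] at h0
  rw [show (∫ t : ℝ, ((m : ℂ) * ((t : ℂ) ^ (m - 1) * Complex.exp (b * t ^ 2 + c * t)) +
      (2 * b * ((t : ℂ) ^ (m + 1) * Complex.exp (b * t ^ 2 + c * t)) +
        c * ((t : ℂ) ^ m * Complex.exp (b * t ^ 2 + c * t))))) =
      (∫ t : ℝ, (m : ℂ) * ((t : ℂ) ^ (m - 1) * Complex.exp (b * t ^ 2 + c * t))) +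
      ((∫ t : ℝ, 2 * b * ((t : ℂ) ^ (m + 1) * Complex.exp (b * t ^ 2 + c * t))) +
        ∫ t : ℝ, c * ((t : ℂ) ^ m * Complex.exp (b * t ^ 2 + c * t)))
    from by rw [integral_add h1 h23, integral_add h2 h3], integral_const_mul,
    integral_const_mul, integral_const_mul] at h0
  exact h0

theorem stmt10 (ν ξ z w : ℂ) (α : ℝ) (hα : 0 < α) (n : ℕ) :
    Ic ν (α : ℂ) ξ z w n =
      ((Real.sqrt (1 / (α * Real.pi)) : ℝ) : ℂ) * 2 ^ n *
        ∫ t : ℝ, (t : ℂ) ^ n *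
          Complex.exp (-(1 / (4 * (α : ℂ))) *
            (2 * (t : ℂ) - (ν * w - 2 * (α : ℂ) * z - ξ)) ^ 2) := by
  have hα' : (α : ℂ) ≠ 0 := Complex.ofReal_ne_zero.mpr (ne_of_gt hα)
  set K : ℂ := ((Real.sqrt (1 / (α * Real.pi)) : ℝ) : ℂ) with hK
  set C : ℂ := ν * w - 2 * (α : ℂ) * z - ξ with hCdef
  set b : ℂ := ((-α⁻¹ : ℝ) : ℂ) with hbdef
  set c : ℂ := C / (α : ℂ) with hcdef
  set d : ℂ := -(C ^ 2 / (4 * (α : ℂ))) with hddef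
  have hb : b.re < 0 := by
    rw [hbdef, Complex.ofReal_re]
    simp [inv_pos.mpr hα]
  have hbα : b = -((α : ℂ))⁻¹ := by push_cast [hbdef]; ring
  set J : ℕ → ℂ := fun m => ∫ t : ℝ, (t : ℂ) ^ m * Complex.exp (b * t ^ 2 + c * t) with hJ
  -- rewrite the integrand
  have hpt : ∀ (m : ℕ) (t : ℝ), (t : ℂ) ^ m *
      Complex.exp (-(1 / (4 * (α : ℂ))) * (2 * (t : ℂ) - C) ^ 2) =
      ((t : ℂ) ^ m * Complex.exp (b * t ^ 2 + c * t)) * Complex.exp d := by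
    intro m t
    rw [mul_assoc, ← Complex.exp_add]
    congr 1
    congr 1
    rw [hbα, hcdef, hddef]
    field_simp [hα']
    ring
  have hsplit : ∀ m : ℕ, (∫ t : ℝ, (t : ℂ) ^ m *
      Complex.exp (-(1 / (4 * (α : ℂ))) * (2 * (t : ℂ) - C) ^ 2)) =
      J m * Complex.exp d := by
    intro m
    simp_rw [hpt m]
    exact integral_mul_const _ _
  -- value of J 0 * exp d
  have hJ0 : J 0 * Complex.exp d = ((Real.sqrt (α * Real.pi) : ℝ) : ℂ) := by
    have h := integral_cexp_quadratic hb c d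
    have h1 : (∫ x : ℝ, Complex.exp (b * x ^ 2 + c * x + d)) = J 0 * Complex.exp d := by
      simp_rw [hJ, Complex.exp_add]
      simp only [pow_zero, one_mul]
      exact integral_mul_const _ _
    have h2 : d - c ^ 2 / (4 * b) = 0 := by
      rw [hddef, hcdef, hbα]
      field_simp [hα']
      ring
    have h3 : (↑Real.pi / -b) ^ (1 / 2 : ℂ) = ((Real.sqrt (α * Real.pi) : ℝ) : ℂ) := by
      have h4 : (↑Real.pi / -b) = (((α * Real.pi : ℝ)) : ℂ) := by
        rw [hbα]
        push_cast
        field_simp [hα']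
      rw [h4, show (1 / 2 : ℂ) = ((1 / 2 : ℝ) : ℂ) by norm_num,
        ← Complex.ofReal_cpow (by positivity), ← Real.sqrt_eq_rpow]
    rw [h1, h2, Complex.exp_zero, mul_one, h3] at h
    exact h
  have hKJ : K * (J 0 * Complex.exp d) = 1 := by
    rw [hJ0, hK, ← Complex.ofReal_mul, ← Real.sqrt_mul (by positivity) (α * Real.pi),
      one_div_mul_cancel (by positivity), Real.sqrt_one, Complex.ofReal_one]
  -- recursion for J
  have hstep : ∀ m : ℕ, J (m + 2) = (C / 2) * J (m + 1) + ((α : ℂ) * (m + 1) / 2) * J m := by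
    intro m
    have hp := key_parts hb c (m + 1)
    simp only [Nat.add_sub_cancel] at hp
    have hp' : ((m : ℂ) + 1) * J m + (2 * b * J (m + 2) + c * J (m + 1)) = 0 := by
      push_cast at hp
      exact hp
    rw [hbα, hcdef] at hp'
    field_simp [hα'] at hp'
    apply mul_left_cancel₀ (show (2 * (α : ℂ)) ≠ 0 by simp [hα'])
    linear_combination -(α : ℂ) * hp'
  -- J 1
  have hJ1 : J 1 = (C / 2) * J 0 := by
    have hp := key_parts hb c 0
    simp only [Nat.cast_zero, zero_mul, zero_add, Nat.zero_sub, pow_zero] at hp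
    have hp' : 2 * b * J 1 + c * J 0 = 0 := by
      rw [hJ]
      convert hp using 3 <;> simp [pow_one]
    rw [hbα, hcdef] at hp'
    field_simp [hα'] at hp'
    apply mul_left_cancel₀ (show (2 * (α : ℂ)) ≠ 0 by simp [hα'])
    linear_combination -(α : ℂ) * hp'
  -- main two-step induction
  have main : ∀ m : ℕ, Ic ν (α : ℂ) ξ z w m = K * 2 ^ m * (J m * Complex.exp d) ∧
      Ic ν (α : ℂ) ξ z w (m + 1) = K * 2 ^ (m + 1) * (J (m + 1) * Complex.exp d) := by
    intro m
    induction m with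
    | zero =>
      constructor
      · show (1 : ℂ) = K * 2 ^ 0 * (J 0 * Complex.exp d)
        rw [pow_zero, mul_one, ← mul_assoc]
        rw [mul_assoc, hKJ]
      · show C = K * 2 ^ 1 * (J 1 * Complex.exp d)
        rw [hJ1, pow_one]
        have : K * 2 * (C / 2 * J 0 * Complex.exp d) = C * (K * (J 0 * Complex.exp d)) := by
          ring
        rw [this, hKJ, mul_one]
    | succ k ih =>
      refine ⟨ih.2, ?_⟩
      show C * Ic ν (α : ℂ) ξ z w (k + 1) + 2 * (α : ℂ) * (k + 1) * Ic ν (α : ℂ) ξ z w k =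
        K * 2 ^ (k + 2) * (J (k + 2) * Complex.exp d)
      rw [ih.1, ih.2, hstep k]
      push_cast
      ring
  have hfin := (main n).1
  rw [hfin, hsplit n]
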